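/- arXiv:2510.19411 — 5 statements merged into one kernel-verified Lean document; each statement's English description precedes it below -/
import Mathlib

section
/- A graph G admits an H_d-flow if and only if G admits an oriented d-cycle double cover. -/
open scoped BigOperators

/-- `Hd d` : vectors in `ℝ^d` with exactly one coordinate `1`, one `-1`, rest `0`. -/
def Hd (d : ℕ) : Set (EuclideanSpace ℝ (Fin d)) :=
  {x | ∃ i j : Fin d, i ≠ j ∧ x i = 1 ∧ x j = -1 ∧ ∀ k, k ≠ i → k ≠ j → x k = 0}
/-- A flow on a graph, represented as an antisymmetric function on ordered pairs of vertices,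
supported on edges, with conservation at every vertex. -/
def IsFlow {V : Type*} [Fintype V] {d : ℕ} (G : SimpleGraph V)
    (f : V → V → EuclideanSpace ℝ (Fin d)) : Prop :=
  (∀ u v, f u v = - f v u) ∧ (∀ u v, ¬ G.Adj u v → f u v = 0) ∧ (∀ v, ∑ u, f v u = 0)

/-- `G` admits a flow with all edge values in the (symmetric) set `X`. -/
def HasFlowIn {V : Type*} [Fintype V] {d : ℕ} (G : SimpleGraph V)
    (X : Set (EuclideanSpace ℝ (Fin d))) : Prop :=
  ∃ f, IsFlow G f ∧ ∀ u v, G.Adj u v → f u v ∈ X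
/-- An oriented `d`-cycle double cover: `d` integer circulations with values in `{-1,0,1}`
(each being an eulerian-oriented even subgraph, i.e. a directed cycle), such that every edge
lies in exactly two of them (`∑ i, (c i u v)^2 = 2`) with opposite orientations
(`∑ i, c i u v = 0`). -/
def IsOrientedCDC {V : Type*} [Fintype V] (G : SimpleGraph V) {d : ℕ}
    (c : Fin d → V → V → ℤ) : Prop :=
  (∀ i u v, c i u v = - c i v u) ∧
  (∀ i u v, ¬ G.Adj u v → c i u v = 0) ∧
  (∀ i u v, c i u v = 1 ∨ c i u v = 0 ∨ c i u v = -1) ∧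
  (∀ i v, ∑ u, c i v u = 0) ∧
  (∀ u v, G.Adj u v → (∑ i, (c i u v)^2 = 2 ∧ ∑ i, c i u v = 0))

lemma key_lemma {d : ℕ} (c : Fin d → ℤ) (h1 : ∀ i, c i = 1 ∨ c i = 0 ∨ c i = -1)
    (h2 : ∑ i, (c i)^2 = 2) (h3 : ∑ i, c i = 0) :
    ∃ i j : Fin d, i ≠ j ∧ c i = 1 ∧ c j = -1 ∧ ∀ k, k ≠ i → k ≠ j → c k = 0 := by
  classical
  set s : Finset (Fin d) := Finset.univ.filter (fun i => c i ≠ 0) with hs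
  have hsq : ∀ i ∈ s, (c i)^2 = 1 := by
    intro i hi
    simp only [hs, Finset.mem_filter] at hi
    rcases h1 i with h | h | h <;> simp [h] at hi ⊢
  have hsub : ∑ i ∈ s, (c i)^2 = ∑ i, (c i)^2 := by
    apply Finset.sum_subset (Finset.subset_univ s)
    intro x _ hx
    simp only [hs, Finset.mem_filter, Finset.mem_univ, true_and, not_not] at hx
    simp [hx]
  have hcard : s.card = 2 := by
    have h : ∑ i ∈ s, (c i)^2 = (s.card : ℤ) := by
      rw [Finset.sum_congr rfl hsq]; simp
    have : (s.card : ℤ) = 2 := by rw [← h, hsub, h2]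
    exact_mod_cast this
  obtain ⟨i, j, hij, hsij⟩ := Finset.card_eq_two.mp hcard
  have hzero : ∀ k, k ≠ i → k ≠ j → c k = 0 := by
    intro k hki hkj
    have : k ∉ s := by rw [hsij]; simp [hki, hkj]
    simpa [hs] using this
  have hisum : c i + c j = 0 := by
    have hsum2 : ∑ k ∈ s, c k = ∑ k, c k := by
      apply Finset.sum_subset (Finset.subset_univ s)
      intro x _ hx
      simp only [hs, Finset.mem_filter, Finset.mem_univ, true_and, not_not] at hx
      exact hx
    rw [hsij, Finset.sum_pair hij] at hsum2
    rw [hsum2, h3]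
  have hi : c i ≠ 0 := by
    have : i ∈ s := by rw [hsij]; simp
    simpa [hs] using this
  rcases h1 i with h | h | h
  · exact ⟨i, j, hij, h, by omega, hzero⟩
  · exact absurd h hi
  · refine ⟨j, i, hij.symm, by omega, h, fun k hkj hki => hzero k hki hkj⟩

/-- A graph admits an `H_d`-flow iff it admits an oriented `d`-cycle double cover. -/
theorem stmt6 {V : Type*} [Fintype V] (G : SimpleGraph V) (d : ℕ) :
    HasFlowIn G (Hd d) ↔ ∃ c : Fin d → V → V → ℤ, IsOrientedCDC G c := by
  classical
  constructor
  · rintro ⟨f, ⟨hanti, hsupp, hcons⟩, hmem⟩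
    -- f takes values in {1,0,-1} coordinatewise
    have htri : ∀ u v i, f u v i = 1 ∨ f u v i = 0 ∨ f u v i = -1 := by
      intro u v i
      by_cases hadj : G.Adj u v
      · obtain ⟨i0, j0, hne, h1, h2, h0⟩ := hmem u v hadj
        by_cases hi0 : i = i0
        · left; rw [hi0]; exact h1
        · by_cases hj0 : i = j0
          · right; right; rw [hj0]; exact h2
          · right; left; exact h0 i hi0 hj0
      · right; left; rw [hsupp u v hadj]; rfl
    set c : Fin d → V → V → ℤ := fun i u v =>
      if f u v i = 1 then 1 else if f u v i = -1 then -1 else 0 with hc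
    have hcast : ∀ i u v, ((c i u v : ℤ) : ℝ) = f u v i := by
      intro i u v
      rcases htri u v i with h | h | h <;> simp [hc, h] <;> norm_num
    refine ⟨c, ?_, ?_, ?_, ?_, ?_⟩
    · intro i u v
      have h : ((c i u v : ℤ) : ℝ) = ((-(c i v u) : ℤ) : ℝ) := by
        rw [hcast]
        push_cast
        rw [hcast]
        have := congrArg (fun x => x i) (hanti u v)
        simpa using this
      exact_mod_cast h
    · intro i u v hadj
      have h0 : f u v i = 0 := by rw [hsupp u v hadj]; rfl
      simp [hc, h0]
    · intro i u v
      simp only [hc]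
      split_ifs <;> simp
    · intro i v
      have h : ((∑ u, c i v u : ℤ) : ℝ) = 0 := by
        push_cast
        have hpt : (∑ u, f v u) i = 0 := by rw [hcons v]; rfl
        rw [← hpt]
        rw [WithLp.ofLp_sum, Finset.sum_apply i Finset.univ (fun u => (f v u).ofLp)]
        exact Finset.sum_congr rfl fun u _ => hcast i v u
      exact_mod_cast h
    · intro u v hadj
      obtain ⟨i0, j0, hne, h1, h2, h0⟩ := hmem u v hadj
      have hci0 : c i0 u v = 1 := by simp [hc, h1]
      have hcj0 : c j0 u v = -1 := by simp [hc, h2]; norm_num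
      have hckz : ∀ k, k ≠ i0 → k ≠ j0 → c k u v = 0 := by
        intro k hki hkj
        simp [hc, h0 k hki hkj]
      have hpair : ({i0, j0} : Finset (Fin d)) ⊆ Finset.univ := Finset.subset_univ _
      constructor
      · have : ∑ i ∈ ({i0, j0} : Finset (Fin d)), (c i u v)^2 = ∑ i, (c i u v)^2 := by
          apply Finset.sum_subset hpair
          intro x _ hx
          simp only [Finset.mem_insert, Finset.mem_singleton, not_or] at hx
          rw [hckz x hx.1 hx.2]; ring
        rw [← this, Finset.sum_pair hne, hci0, hcj0]; ring
      · have : ∑ i ∈ ({i0, j0} : Finset (Fin d)), c i u v = ∑ i, c i u v := by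
          apply Finset.sum_subset hpair
          intro x _ hx
          simp only [Finset.mem_insert, Finset.mem_singleton, not_or] at hx
          exact hckz x hx.1 hx.2
        rw [← this, Finset.sum_pair hne, hci0, hcj0]; ring
  · rintro ⟨c, hanti, hsupp, htri, hcons, hedge⟩
    refine ⟨fun u v => (WithLp.toLp 2 (fun i => ((c i u v : ℤ) : ℝ)) : EuclideanSpace ℝ (Fin d)),
      ⟨?_, ?_, ?_⟩, ?_⟩
    · intro u v
      ext i
      show ((c i u v : ℤ) : ℝ) = -((c i v u : ℤ) : ℝ)
      rw [hanti i u v]; push_cast; ring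
    · intro u v hadj
      ext i
      show ((c i u v : ℤ) : ℝ) = 0
      rw [hsupp i u v hadj]; norm_num
    · intro v
      ext i
      show (∑ u, (WithLp.toLp 2 (fun i => ((c i v u : ℤ) : ℝ)) : EuclideanSpace ℝ (Fin d))) i = 0
      rw [WithLp.ofLp_sum, Finset.sum_apply i Finset.univ _]
      have : ∑ u, ((c i v u : ℤ) : ℝ) = ((∑ u, c i v u : ℤ) : ℝ) := by push_cast; rfl
      rw [this, hcons i v]; norm_num
    · intro u v hadj
      obtain ⟨hsq, hsum⟩ := hedge u v hadj
      obtain ⟨i, j, hij, hi, hj, hz⟩ := key_lemma (fun i => c i u v) (fun i => htri i u v) hsq hsum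
      refine ⟨i, j, hij, ?_, ?_, ?_⟩
      · show ((c i u v : ℤ) : ℝ) = 1; rw [hi]; norm_num
      · show ((c j u v : ℤ) : ℝ) = -1; rw [hj]; norm_num
      · intro k hki hkj
        show ((c k u v : ℤ) : ℝ) = 0
        rw [hz k hki hkj]; norm_num
end

section
/- For d ≥ 3, let a_1, ..., a_{d-1} ∈ ℝ^{d-1} be defined by: a_i has entry d√d − 2√d − 1 in position i and −√d − 1 elsewhere, and let a_d have all entries equal to d − 1. Then for all 1 ≤ i < j ≤ d, the norm |a_i + a_j| = (d−1)√(2(d−2)) and |a_i − a_j| = (d−1)√(2d). -/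
open scoped BigOperators

lemma sum_special_two {n : ℕ} (i j : Fin n) (hij : i ≠ j) (f : Fin n → ℝ) (c : ℝ)
    (hf : ∀ k, k ≠ i → k ≠ j → f k = c) :
    ∑ k, f k = f i + f j + ((n : ℝ) - 2) * c := by
  have hrw : ∀ k : Fin n, f k = c + (if k = i then f i - c else 0) + (if k = j then f j - c else 0) := by
    intro k
    by_cases h1 : k = i
    · subst h1
      rw [if_pos rfl, if_neg hij]
      ring
    · by_cases h2 : k = j
      · subst h2
        rw [if_neg h1, if_pos rfl]
        ring
      · rw [if_neg h1, if_neg h2, hf k h1 h2]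
        ring
  rw [Finset.sum_congr rfl (fun k _ => hrw k)]
  rw [Finset.sum_add_distrib, Finset.sum_add_distrib, Finset.sum_const,
    Finset.sum_ite_eq' Finset.univ i, Finset.sum_ite_eq' Finset.univ j]
  simp [Finset.card_univ]
  ring

lemma sum_special_one {n : ℕ} (i : Fin n) (f : Fin n → ℝ) (c : ℝ)
    (hf : ∀ k, k ≠ i → f k = c) :
    ∑ k, f k = f i + ((n : ℝ) - 1) * c := by
  have hrw : ∀ k : Fin n, f k = c + (if k = i then f i - c else 0) := by
    intro k
    by_cases h1 : k = i
    · subst h1; rw [if_pos rfl]; ring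
    · rw [if_neg h1, hf k h1]; ring
  rw [Finset.sum_congr rfl (fun k _ => hrw k)]
  rw [Finset.sum_add_distrib, Finset.sum_const, Finset.sum_ite_eq' Finset.univ i]
  simp [Finset.card_univ]
  ring

lemma norm_formula {n : ℕ} (x : EuclideanSpace ℝ (Fin n)) (c b : ℝ) (hc : 0 ≤ c) (_hb : 0 ≤ b)
    (h : ∑ k, (x k) ^ 2 = c ^ 2 * b) : ‖x‖ = c * Real.sqrt b := by
  rw [EuclideanSpace.norm_eq]
  simp only [Real.norm_eq_abs, sq_abs]
  rw [h, Real.sqrt_mul (sq_nonneg c), Real.sqrt_sq hc]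

/-- For the points `a_1, …, a_d ∈ ℝ^{d-1}` where `a_i` (`i < d-1`, i.e. `i` among the first
`d-1` indices) has entry `d√d - 2√d - 1` in position `i` and `-√d - 1` elsewhere, and the
last point has all entries `d - 1`, we have `‖a_i + a_j‖ = (d-1)√(2(d-2))` and
`‖a_i - a_j‖ = (d-1)√(2d)` for all `i ≠ j`. -/
theorem stmt9 (d : ℕ) (hd : 3 ≤ d) (a : Fin d → EuclideanSpace ℝ (Fin (d - 1)))
    (ha : ∀ i : Fin d, ∀ k : Fin (d - 1),
      a i k = if (i : ℕ) = d - 1 then (d : ℝ) - 1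
        else if (k : ℕ) = (i : ℕ) then
          d * Real.sqrt d - 2 * Real.sqrt d - 1
        else - Real.sqrt d - 1) :
    ∀ i j : Fin d, i ≠ j →
      ‖a i + a j‖ = ((d : ℝ) - 1) * Real.sqrt (2 * ((d : ℝ) - 2)) ∧
      ‖a i - a j‖ = ((d : ℝ) - 1) * Real.sqrt (2 * (d : ℝ)) := by
  set s := Real.sqrt (d : ℝ) with hs_def
  have hs : s ^ 2 = (d : ℝ) := Real.sq_sqrt (by positivity)
  have hdc1 : ((d - 1 : ℕ) : ℝ) = (d : ℝ) - 1 := by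
    rw [Nat.cast_sub (by omega)]; norm_num
  have hc : (0 : ℝ) ≤ (d : ℝ) - 1 := by
    have : (3 : ℝ) ≤ (d : ℝ) := by exact_mod_cast hd
    linarith
  have hb1 : (0 : ℝ) ≤ 2 * ((d : ℝ) - 2) := by
    have : (3 : ℝ) ≤ (d : ℝ) := by exact_mod_cast hd
    linarith
  have hb2 : (0 : ℝ) ≤ 2 * (d : ℝ) := by positivity
  -- value lemmas
  have hav : ∀ (i : Fin d), (i : ℕ) < d - 1 → ∀ (k : Fin (d - 1)),
      a i k = if (k : ℕ) = (i : ℕ) then (d : ℝ) * s - 2 * s - 1 else -s - 1 := by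
    intro i hi k
    rw [ha i k, if_neg (by omega)]
  have hlast : ∀ (i : Fin d), (i : ℕ) = d - 1 → ∀ (k : Fin (d - 1)),
      a i k = (d : ℝ) - 1 := by
    intro i hi k
    rw [ha i k, if_pos hi]
  -- Case: both indices below d-1
  have caseA : ∀ i j : Fin d, (i : ℕ) < d - 1 → (j : ℕ) < d - 1 → i ≠ j →
      ‖a i + a j‖ = ((d : ℝ) - 1) * Real.sqrt (2 * ((d : ℝ) - 2)) ∧
      ‖a i - a j‖ = ((d : ℝ) - 1) * Real.sqrt (2 * (d : ℝ)) := by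
    intro i j hi hj hij
    set i' : Fin (d - 1) := ⟨(i : ℕ), hi⟩ with hi'
    set j' : Fin (d - 1) := ⟨(j : ℕ), hj⟩ with hj'
    have hij' : i' ≠ j' := by
      intro h
      rw [hi', hj', Fin.mk.injEq] at h
      exact hij (Fin.ext h)
    have hvij : (i : ℕ) ≠ (j : ℕ) := fun h => hij (Fin.ext h)
    constructor
    · apply norm_formula _ _ _ hc hb1
      have hsum : ∀ k, ((a i + a j) k) ^ 2 =
          (fun k => (a i k + a j k) ^ 2) k := by
        intro k; simp [PiLp.add_apply]
      rw [Finset.sum_congr rfl (fun k _ => hsum k)]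
      rw [sum_special_two i' j' hij' _ ((-s - 1 + (-s - 1)) ^ 2)]
      · have e1 : a i i' = (d : ℝ) * s - 2 * s - 1 := by
          rw [hav i hi i', if_pos rfl]
        have e2 : a j i' = -s - 1 := by
          rw [hav j hj i', if_neg hvij]
        have e3 : a i j' = -s - 1 := by
          rw [hav i hi j', if_neg (Ne.symm hvij)]
        have e4 : a j j' = (d : ℝ) * s - 2 * s - 1 := by
          rw [hav j hj j', if_pos rfl]
        simp only [e1, e2, e3, e4, hdc1]
        nlinarith [hs]
      · intro k hk1 hk2
        have hk1' : (k : ℕ) ≠ (i : ℕ) := fun h => hk1 (Fin.ext h)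
        have hk2' : (k : ℕ) ≠ (j : ℕ) := fun h => hk2 (Fin.ext h)
        rw [hav i hi k, if_neg hk1', hav j hj k, if_neg hk2']
    · apply norm_formula _ _ _ hc hb2
      have hsum : ∀ k, ((a i - a j) k) ^ 2 =
          (fun k => (a i k - a j k) ^ 2) k := by
        intro k; simp [PiLp.sub_apply]
      rw [Finset.sum_congr rfl (fun k _ => hsum k)]
      rw [sum_special_two i' j' hij' _ ((-s - 1 - (-s - 1)) ^ 2)]
      · have e1 : a i i' = (d : ℝ) * s - 2 * s - 1 := by
          rw [hav i hi i', if_pos rfl]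
        have e2 : a j i' = -s - 1 := by
          rw [hav j hj i', if_neg hvij]
        have e3 : a i j' = -s - 1 := by
          rw [hav i hi j', if_neg (Ne.symm hvij)]
        have e4 : a j j' = (d : ℝ) * s - 2 * s - 1 := by
          rw [hav j hj j', if_pos rfl]
        simp only [e1, e2, e3, e4, hdc1]
        nlinarith [hs]
      · intro k hk1 hk2
        have hk1' : (k : ℕ) ≠ (i : ℕ) := fun h => hk1 (Fin.ext h)
        have hk2' : (k : ℕ) ≠ (j : ℕ) := fun h => hk2 (Fin.ext h)
        rw [hav i hi k, if_neg hk1', hav j hj k, if_neg hk2']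
  -- Case: i below, j is last
  have caseB : ∀ i j : Fin d, (i : ℕ) < d - 1 → (j : ℕ) = d - 1 →
      ‖a i + a j‖ = ((d : ℝ) - 1) * Real.sqrt (2 * ((d : ℝ) - 2)) ∧
      ‖a i - a j‖ = ((d : ℝ) - 1) * Real.sqrt (2 * (d : ℝ)) := by
    intro i j hi hj
    set i' : Fin (d - 1) := ⟨(i : ℕ), hi⟩ with hi'
    constructor
    · apply norm_formula _ _ _ hc hb1
      have hsum : ∀ k, ((a i + a j) k) ^ 2 =
          (fun k => (a i k + a j k) ^ 2) k := by
        intro k; simp [PiLp.add_apply]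
      rw [Finset.sum_congr rfl (fun k _ => hsum k)]
      rw [sum_special_one i' _ ((-s - 1 + ((d : ℝ) - 1)) ^ 2)]
      · have e1 : a i i' = (d : ℝ) * s - 2 * s - 1 := by
          rw [hav i hi i', if_pos rfl]
        have e2 : a j i' = (d : ℝ) - 1 := hlast j hj i'
        simp only [e1, e2, hdc1]
        nlinarith [hs]
      · intro k hk1
        have hk1' : (k : ℕ) ≠ (i : ℕ) := fun h => hk1 (Fin.ext h)
        rw [hav i hi k, if_neg hk1', hlast j hj k]
    · apply norm_formula _ _ _ hc hb2
      have hsum : ∀ k, ((a i - a j) k) ^ 2 =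
          (fun k => (a i k - a j k) ^ 2) k := by
        intro k; simp [PiLp.sub_apply]
      rw [Finset.sum_congr rfl (fun k _ => hsum k)]
      rw [sum_special_one i' _ ((-s - 1 - ((d : ℝ) - 1)) ^ 2)]
      · have e1 : a i i' = (d : ℝ) * s - 2 * s - 1 := by
          rw [hav i hi i', if_pos rfl]
        have e2 : a j i' = (d : ℝ) - 1 := hlast j hj i'
        simp only [e1, e2, hdc1]
        nlinarith [hs]
      · intro k hk1
        have hk1' : (k : ℕ) ≠ (i : ℕ) := fun h => hk1 (Fin.ext h)
        rw [hav i hi k, if_neg hk1', hlast j hj k]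
  intro i j hij
  have hi' := i.isLt
  have hj' := j.isLt
  rcases Nat.lt_or_ge (i : ℕ) (d - 1) with hi | hi
  · rcases Nat.lt_or_ge (j : ℕ) (d - 1) with hj | hj
    · exact caseA i j hi hj hij
    · exact caseB i j hi (by omega)
  · have hieq : (i : ℕ) = d - 1 := by omega
    rcases Nat.lt_or_ge (j : ℕ) (d - 1) with hj | hj
    · have h2 := caseB j i hj hieq
      rw [add_comm (a i) (a j), norm_sub_rev]
      exact h2
    · exact absurd (Fin.ext (by omega : (i : ℕ) = (j : ℕ))) hij
end

section
/- If a graph G admits an oriented d-cycle double cover for some d ≥ 3, then φ_{d−1}(G) = 2, i.e., G admits a flow with all edge values of equal Euclidean norm in ℝ^{d−1}. -/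
open Finset Module


open scoped BigOperators

/-- `G` admits an `(r, d)`-NZF: a flow into `ℝ^d` with all edge values of norm in `[1, r-1]`. -/
def HasNZF {V : Type*} [Fintype V] (G : SimpleGraph V) (r : ℝ) (d : ℕ) : Prop :=
  ∃ f : V → V → EuclideanSpace ℝ (Fin d), IsFlow G f ∧
    ∀ u v, G.Adj u v → ‖f u v‖ ∈ Set.Icc (1 : ℝ) (r - 1)

/-- The `d`-dimensional flow number: the infimum of `r ≥ 2` such that `G` has an `(r,d)`-NZF. -/
noncomputable def flowNumber {V : Type*} [Fintype V] (G : SimpleGraph V) (d : ℕ) : ℝ :=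
  sInf {r : ℝ | 2 ≤ r ∧ HasNZF G r d}

/-- If `G` admits an oriented `d`-cycle double cover (`d ≥ 3`), then `φ_{d-1}(G) = 2`:
`G` admits a flow into `ℝ^{d-1}` with all edge values of norm exactly `1`. -/
theorem stmt12 {V : Type*} [Fintype V] (G : SimpleGraph V) (d : ℕ) (hd : 3 ≤ d)
    (h : ∃ c : Fin d → V → V → ℤ, IsOrientedCDC G c) :
    flowNumber G (d - 1) = 2 ∧
    ∃ f : V → V → EuclideanSpace ℝ (Fin (d - 1)), IsFlow G f ∧
      ∀ u v, G.Adj u v → ‖f u v‖ = 1 := by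
  obtain ⟨c, hanti, hsupp, hval, hcons, hedge⟩ := h
  have key : ∃ f : V → V → EuclideanSpace ℝ (Fin (d - 1)),
      ((∀ u v, f u v = - f v u) ∧ (∀ u v, ¬ G.Adj u v → f u v = 0) ∧ (∀ v, ∑ u, f v u = 0)) ∧
      ∀ u v, G.Adj u v → ‖f u v‖ = 1 := by
    have hpos : 0 < d := by omega
    let S : EuclideanSpace ℝ (Fin d) →ₗ[ℝ] ℝ :=
      { toFun := fun x => ∑ i, x i
        map_add' := by intro x y; simpa using Finset.sum_add_distrib
        map_smul' := by intro r x; simpa using (Finset.mul_sum _ _ _).symm }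
    have hsurj : Function.Surjective S := by
      intro r
      refine ⟨EuclideanSpace.single ⟨0, hpos⟩ r, ?_⟩
      simp [S, EuclideanSpace.single_apply]
    have h1 : finrank ℝ (LinearMap.range S) + finrank ℝ (LinearMap.ker S) = d := by
      have := S.finrank_range_add_finrank_ker
      simpa using this
    have h2 : finrank ℝ (LinearMap.range S) = 1 := by
      rw [LinearMap.range_eq_top.mpr hsurj]; simp
    have hrank : finrank ℝ (LinearMap.ker S) = d - 1 := by omega
    -- sum of each row of c is 0 (for all pairs, adjacent or not)
    have hsum0 : ∀ u v, ∑ i, ((c i u v : ℝ)) = 0 := by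
      intro u v
      by_cases hA : G.Adj u v
      · exact_mod_cast (hedge u v hA).2
      · simp [hsupp _ _ _ hA]
    -- the raw flow in the hyperplane
    let g : V → V → LinearMap.ker S := fun u v =>
      ⟨(WithLp.toLp 2 (fun i => (c i u v : ℝ)) : EuclideanSpace ℝ (Fin d)), by
        simp only [LinearMap.mem_ker]
        exact hsum0 u v⟩
    let L : LinearMap.ker S ≃ₗᵢ[ℝ] EuclideanSpace ℝ (Fin (d - 1)) :=
      (stdOrthonormalBasis ℝ (LinearMap.ker S)).repr.trans
        (LinearIsometryEquiv.piLpCongrLeft 2 ℝ ℝ (finCongr hrank))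
    refine ⟨fun u v => (Real.sqrt 2)⁻¹ • L (g u v), ⟨?_, ?_, ?_⟩, ?_⟩
    · intro u v
      beta_reduce
      have hg : g u v = - g v u := by
        apply Subtype.ext
        ext i
        simp [g, hanti i u v]
      rw [hg, map_neg, smul_neg]
    · intro u v hA
      beta_reduce
      have hg : g u v = 0 := by
        apply Subtype.ext
        ext i
        simp [g, hsupp i u v hA]
      rw [hg, map_zero, smul_zero]
    · intro v
      beta_reduce
      rw [← Finset.smul_sum, ← map_sum]
      have : (∑ u, g v u) = 0 := by
        apply Subtype.ext
        rw [AddSubmonoidClass.coe_finset_sum]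
        ext i
        rw [WithLp.ofLp_sum, Finset.sum_apply]
        show ∑ u, ((c i v u : ℝ)) = (0 : EuclideanSpace ℝ (Fin d)) i
        have h0 : (0 : EuclideanSpace ℝ (Fin d)) i = 0 := rfl
        rw [h0]
        exact_mod_cast hcons i v
      rw [this, map_zero, smul_zero]
    · intro u v hA
      beta_reduce
      have hnormg : ‖g u v‖ = Real.sqrt 2 := by
        have : ‖(g u v : EuclideanSpace ℝ (Fin d))‖ = Real.sqrt 2 := by
          rw [EuclideanSpace.norm_eq]
          congr 1
          have h2' : ((∑ i, (c i u v)^2 : ℤ) : ℝ) = 2 := by exact_mod_cast (hedge u v hA).1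
          push_cast at h2'
          rw [← h2']
          refine Finset.sum_congr rfl fun i _ => ?_
          rw [Real.norm_eq_abs, sq_abs]
        simpa using this
      rw [norm_smul, L.norm_map, hnormg]
      rw [Real.norm_eq_abs, abs_inv, abs_of_nonneg (Real.sqrt_nonneg 2)]
      exact inv_mul_cancel₀ (by positivity)
  obtain ⟨f, hflow, hnorm⟩ := key
  have hnzf : HasNZF G 2 (d - 1) := ⟨f, hflow, fun u v hA => by
    rw [hnorm u v hA]; constructor <;> norm_num⟩
  refine ⟨?_, f, hflow, hnorm⟩
  apply le_antisymm
  · exact csInf_le ⟨2, fun r hr => hr.1⟩ ⟨le_refl 2, hnzf⟩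
  · exact le_csInf ⟨2, le_refl 2, hnzf⟩ fun r hr => hr.1
end

section
/- For every d ≥ 3, if a graph G admits an oriented d-cycle double cover, then φ_{d−2}(G) ≤ 1 + √(d/(d−2)) if d is even, and φ_{d−2}(G) ≤ 1 + √((d²−1)/(d²−2d−1)) if d is odd. -/
open scoped BigOperators

/-- Sum of coordinates over a finset, as a linear map. -/
def sumOnL {d : ℕ} (s : Finset (Fin d)) : EuclideanSpace ℝ (Fin d) →ₗ[ℝ] ℝ where
  toFun x := ∑ k ∈ s, x k
  map_add' x y := by simp [Finset.sum_add_distrib]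
  map_smul' r x := by simp [Finset.mul_sum]

lemma card_filter_val_lt (d a : ℕ) (h : a ≤ d) :
    ((Finset.univ : Finset (Fin d)).filter (fun i : Fin d => (i : ℕ) < a)).card = a := by
  classical
  rw [show ((Finset.univ : Finset (Fin d)).filter (fun i : Fin d => (i : ℕ) < a)) =
      (Finset.univ : Finset (Fin a)).map
        ⟨fun i : Fin a => (⟨(i : ℕ), lt_of_lt_of_le i.2 h⟩ : Fin d), by
          intro x y hxy
          simpa [Fin.ext_iff] using hxy⟩ from ?_]
  · simp
  · ext k
    simp only [Finset.mem_filter, Finset.mem_univ, true_and, Finset.mem_map,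
      Function.Embedding.coeFn_mk]
    constructor
    · intro hk; exact ⟨⟨(k : ℕ), hk⟩, Fin.ext rfl⟩
    · rintro ⟨x, -, rfl⟩; exact x.2

lemma exists_points (d : ℕ) (hd : 3 ≤ d) (T : ℝ)
    (hT : T = 2 * (2 - ((d / 2 : ℕ) : ℝ)⁻¹ - (((d - d / 2 : ℕ)) : ℝ)⁻¹)⁻¹) :
    ∃ p : Fin d → EuclideanSpace ℝ (Fin (d - 2)),
      ∀ i j : Fin d, i ≠ j → 1 ≤ ‖p i - p j‖ ∧ ‖p i - p j‖ ≤ Real.sqrt T := by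
  classical
  set a : ℕ := d / 2 with ha
  set b : ℕ := d - d / 2 with hb
  have ha1 : 1 ≤ a := by omega
  have hb2 : 2 ≤ b := by omega
  have haR : (0 : ℝ) < (a : ℝ) := by exact_mod_cast Nat.lt_of_lt_of_le Nat.zero_lt_one ha1
  have hbR : (0 : ℝ) < (b : ℝ) := by exact_mod_cast Nat.lt_of_lt_of_le Nat.zero_lt_two hb2
  set C : ℝ := 2 - (a : ℝ)⁻¹ - (b : ℝ)⁻¹ with hC
  have hCpos : 0 < C := by
    have h1 : (a : ℝ)⁻¹ ≤ 1 := by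
      rw [inv_le_one_iff₀]; right; exact_mod_cast ha1
    have h2 : (b : ℝ)⁻¹ ≤ (2:ℝ)⁻¹ := by
      have hb2' : (2:ℝ) ≤ (b:ℝ) := by exact_mod_cast hb2
      gcongr
    rw [hC]; norm_num at h2 ⊢; linarith
  have hC2 : C ≤ 2 := by
    have h1 : 0 < (a:ℝ)⁻¹ := by positivity
    have h2 : 0 < (b:ℝ)⁻¹ := by positivity
    rw [hC]; linarith
  have hT1 : 1 ≤ T := by
    have h3 : (2:ℝ)⁻¹ ≤ C⁻¹ := by gcongr
    rw [hT]; linarith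
  set α : ℝ := Real.sqrt C⁻¹ with hα
  have hα2 : α ^ 2 = C⁻¹ := Real.sq_sqrt (by positivity)
  -- group sizes
  set s : Fin d → ℕ := fun i => if (i : ℕ) < a then a else b with hs
  have hs1 : ∀ i, 1 ≤ s i := by
    intro i; simp only [hs]; split <;> omega
  have hsR : ∀ i, (0 : ℝ) < (s i : ℝ) := by
    intro i; exact_mod_cast Nat.lt_of_lt_of_le Nat.zero_lt_one (hs1 i)
  -- the points in ℝ^d
  set q : Fin d → EuclideanSpace ℝ (Fin d) := fun i =>
    WithLp.toLp 2 (fun k => α * ((if k = i then 1 else 0) -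
      (if ((k : ℕ) < a ↔ (i : ℕ) < a) then ((s i : ℝ))⁻¹ else 0))) with hq
  have hqdef : ∀ i k, q i k = α * ((if k = i then 1 else 0) -
      (if ((k : ℕ) < a ↔ (i : ℕ) < a) then ((s i : ℝ))⁻¹ else 0)) := fun i k => rfl
  have hq0 : ∀ (i k : Fin d), ¬((k : ℕ) < a ↔ (i : ℕ) < a) → q i k = 0 := by
    intro i k hk
    have hki : k ≠ i := by rintro rfl; exact hk Iff.rfl
    rw [hqdef, if_neg hki, if_neg hk]; ring
  -- the group of i
  set Grp : Fin d → Finset (Fin d) := fun i =>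
    (Finset.univ.filter (fun k : Fin d => ((k : ℕ) < a ↔ (i : ℕ) < a))) with hGrp
  have hGrpdef : ∀ i, Grp i =
      (Finset.univ.filter (fun k : Fin d => ((k : ℕ) < a ↔ (i : ℕ) < a))) := fun i => rfl
  have hGrpCard : ∀ i, (Grp i).card = s i := by
    intro i
    by_cases hi : (i : ℕ) < a
    · have h1 : Grp i = Finset.univ.filter (fun k : Fin d => (k : ℕ) < a) := by
        rw [hGrpdef]; ext k; simp [hi]
      have h2 : s i = a := by simp only [hs]; rw [if_pos hi]
      rw [h1, h2]
      exact card_filter_val_lt d a (by omega)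
    · have h1 : Grp i = Finset.univ.filter (fun k : Fin d => ¬ (k : ℕ) < a) := by
        rw [hGrpdef]; ext k; simp [hi]
      have h2 : s i = b := by simp only [hs]; rw [if_neg hi]
      rw [h1, h2]
      have h3 := Finset.card_filter_add_card_filter_not
        (s := (Finset.univ : Finset (Fin d))) (fun k : Fin d => (k : ℕ) < a)
      have h4 := card_filter_val_lt d a (by omega)
      simp only [Finset.card_univ, Fintype.card_fin] at h3
      omega
  have hmemGrp : ∀ i, i ∈ Grp i := by
    intro i; rw [hGrpdef]; simp
  -- sum of squares of q i
  have hnormq : ∀ i, ∑ k, (q i k) ^ 2 = α ^ 2 * (1 - ((s i : ℝ))⁻¹) := by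
    intro i
    have step : ∀ k, (q i k) ^ 2 =
        if ((k : ℕ) < a ↔ (i : ℕ) < a) then
          α ^ 2 * (((s i : ℝ))⁻¹ ^ 2 + (if k = i then 1 - 2 * ((s i : ℝ))⁻¹ else 0)) else 0 := by
      intro k
      by_cases hk : ((k : ℕ) < a ↔ (i : ℕ) < a)
      · rw [if_pos hk, hqdef, if_pos hk]
        split_ifs <;> ring
      · rw [if_neg hk, hq0 i k hk]; ring
    calc ∑ k, (q i k) ^ 2
        = ∑ k ∈ Grp i, α ^ 2 * (((s i : ℝ))⁻¹ ^ 2 + (if k = i then 1 - 2 * ((s i : ℝ))⁻¹ else 0)) := by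
          rw [hGrpdef, Finset.sum_filter]
          exact Finset.sum_congr rfl (fun k _ => (step k).symm) |>.symm
      _ = α ^ 2 * ((s i) * ((s i : ℝ))⁻¹ ^ 2 + (1 - 2 * ((s i : ℝ))⁻¹)) := by
          rw [← Finset.mul_sum, Finset.sum_add_distrib, Finset.sum_const,
            Finset.sum_ite_eq' (Grp i) i, if_pos (hmemGrp i), hGrpCard i, nsmul_eq_mul]
      _ = α ^ 2 * (1 - ((s i : ℝ))⁻¹) := by
          have h0 := hsR i
          have h0' : ((s i : ℝ)) ≠ 0 := ne_of_gt h0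
          field_simp
          ring
  -- cross products vanish for different groups
  have hcross : ∀ (i j : Fin d), ¬((i : ℕ) < a ↔ (j : ℕ) < a) → ∀ k, q i k * q j k = 0 := by
    intro i j hg k
    by_cases h1 : ((k : ℕ) < a ↔ (i : ℕ) < a)
    · have h2 : ¬((k : ℕ) < a ↔ (j : ℕ) < a) := by tauto
      rw [hq0 j k h2, mul_zero]
    · rw [hq0 i k h1, zero_mul]
  -- the subspace
  set A : Finset (Fin d) := Finset.univ.filter (fun k : Fin d => (k : ℕ) < a) with hA
  set B : Finset (Fin d) := Finset.univ.filter (fun k : Fin d => ¬ (k : ℕ) < a) with hB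
  set L : EuclideanSpace ℝ (Fin d) →ₗ[ℝ] ℝ × ℝ := (sumOnL A).prod (sumOnL B) with hL
  have hsumGrp : ∀ i, ∑ k ∈ Grp i, q i k = 0 := by
    intro i
    have step : ∀ k ∈ Grp i, q i k = α * ((if k = i then 1 else 0) - ((s i : ℝ))⁻¹) := by
      intro k hk
      rw [hGrpdef, Finset.mem_filter] at hk
      rw [hqdef, if_pos hk.2]
    rw [Finset.sum_congr rfl step, ← Finset.mul_sum, Finset.sum_sub_distrib,
      Finset.sum_ite_eq' (Grp i) i, if_pos (hmemGrp i), Finset.sum_const, hGrpCard i,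
      nsmul_eq_mul, mul_inv_cancel₀ (ne_of_gt (hsR i)), sub_self, mul_zero]
  have hmem : ∀ i, q i ∈ LinearMap.ker L := by
    intro i
    rw [LinearMap.mem_ker, hL, LinearMap.prod_apply]
    have hzero : ∀ (t : Finset (Fin d)), (∀ k ∈ t, ¬((k : ℕ) < a ↔ (i : ℕ) < a)) →
        ∑ k ∈ t, q i k = 0 := by
      intro t ht
      exact Finset.sum_eq_zero (fun k hk => hq0 i k (ht k hk))
    by_cases hi : (i : ℕ) < a
    · have hAG : A = Grp i := by
        rw [hA, hGrpdef]; ext k; simp [hi]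
      have h1 : sumOnL A (q i) = 0 := by
        show ∑ k ∈ A, q i k = 0
        rw [hAG]; exact hsumGrp i
      have h2 : sumOnL B (q i) = 0 := by
        show ∑ k ∈ B, q i k = 0
        apply hzero
        intro k hk
        rw [hB, Finset.mem_filter] at hk
        simp [hk.2, hi]
      simp [Pi.prod, h1, h2]
    · have hBG : B = Grp i := by
        rw [hB, hGrpdef]; ext k; simp [hi]
      have h1 : sumOnL A (q i) = 0 := by
        show ∑ k ∈ A, q i k = 0
        apply hzero
        intro k hk
        rw [hA, Finset.mem_filter] at hk
        simp [hk.2, hi]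
      have h2 : sumOnL B (q i) = 0 := by
        show ∑ k ∈ B, q i k = 0
        rw [hBG]; exact hsumGrp i
      simp [Pi.prod, h1, h2]
  -- surjectivity of L
  have hsurj : Function.Surjective L := by
    rintro ⟨u, w⟩
    have h0d : 0 < d := by omega
    set i₀ : Fin d := ⟨0, h0d⟩ with hi₀
    set j₀ : Fin d := ⟨d - 1, by omega⟩ with hj₀
    have hi₀a : (i₀ : ℕ) < a := by simp only [hi₀]; omega
    have hj₀a : ¬ (j₀ : ℕ) < a := by simp only [hj₀]; omega
    have hi₀A : i₀ ∈ A := by rw [hA, Finset.mem_filter]; exact ⟨Finset.mem_univ _, hi₀a⟩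
    have hj₀A : j₀ ∉ A := by
      rw [hA, Finset.mem_filter]; push_neg; intro _; exact Nat.le_of_not_lt hj₀a
    have hi₀B : i₀ ∉ B := by
      rw [hB, Finset.mem_filter]; push_neg; intro _; simpa using hi₀a
    have hj₀B : j₀ ∈ B := by
      rw [hB, Finset.mem_filter]; exact ⟨Finset.mem_univ _, hj₀a⟩
    refine ⟨EuclideanSpace.single i₀ u + EuclideanSpace.single j₀ w, ?_⟩
    have hsum : ∀ (t : Finset (Fin d)),
        ∑ k ∈ t, (EuclideanSpace.single i₀ u + EuclideanSpace.single j₀ w) k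
          = (if i₀ ∈ t then u else 0) + (if j₀ ∈ t then w else 0) := by
      intro t
      have step : ∀ k, (EuclideanSpace.single i₀ u + EuclideanSpace.single j₀ w) k
          = (if k = i₀ then u else 0) + (if k = j₀ then w else 0) := by
        intro k
        rw [PiLp.add_apply, EuclideanSpace.single_apply, EuclideanSpace.single_apply]
      rw [Finset.sum_congr rfl (fun k _ => step k), Finset.sum_add_distrib,
        Finset.sum_ite_eq' t i₀, Finset.sum_ite_eq' t j₀]
    have h1 : sumOnL A (EuclideanSpace.single i₀ u + EuclideanSpace.single j₀ w) = u := by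
      show ∑ k ∈ A, _ = u
      rw [hsum A, if_pos hi₀A, if_neg hj₀A, add_zero]
    have h2 : sumOnL B (EuclideanSpace.single i₀ u + EuclideanSpace.single j₀ w) = w := by
      show ∑ k ∈ B, _ = w
      rw [hsum B, if_neg hi₀B, if_pos hj₀B, zero_add]
    rw [hL, LinearMap.prod_apply]
    simp [Pi.prod, h1, h2]
  -- finrank of the kernel
  have hrank : Module.finrank ℝ (LinearMap.ker L) = d - 2 := by
    have h1 := LinearMap.finrank_range_add_finrank_ker L
    rw [LinearMap.range_eq_top.2 hsurj, finrank_top, finrank_euclideanSpace_fin] at h1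
    have h2 : Module.finrank ℝ (ℝ × ℝ) = 2 := by simp
    rw [h2] at h1
    omega
  -- the isometry onto ℝ^(d-2)
  set obn := (stdOrthonormalBasis ℝ (LinearMap.ker L)).reindex (finCongr hrank) with hobn
  set p : Fin d → EuclideanSpace ℝ (Fin (d - 2)) :=
    fun i => obn.repr ⟨q i, hmem i⟩ with hp
  refine ⟨p, ?_⟩
  have hpq : ∀ i j, ‖p i - p j‖ = ‖q i - q j‖ := by
    intro i j
    show ‖obn.repr ⟨q i, hmem i⟩ - obn.repr ⟨q j, hmem j⟩‖ = _
    rw [← map_sub, LinearIsometryEquiv.norm_map, ← Submodule.norm_coe,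
      AddSubgroupClass.coe_sub]
  -- squared-norm helper
  have hns : ∀ x : EuclideanSpace ℝ (Fin d), ‖x‖ ^ 2 = ∑ k, (x k) ^ 2 := by
    intro x
    rw [EuclideanSpace.norm_eq, Real.sq_sqrt (by positivity)]
    exact Finset.sum_congr rfl (fun k _ => by rw [Real.norm_eq_abs, sq_abs])
  intro i j hij
  rw [hpq i j]
  by_cases hg : ((i : ℕ) < a ↔ (j : ℕ) < a)
  -- same group : distance² = 2α² = T
  · have hsij : (s i : ℝ) = (s j : ℝ) := by
      simp only [hs]
      by_cases hi : (i : ℕ) < a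
      · rw [if_pos hi, if_pos (hg.mp hi)]
      · rw [if_neg hi, if_neg (fun h => hi (hg.mpr h))]
    have hsub : ∀ k, q i k - q j k =
        α * ((if k = i then 1 else 0) - (if k = j then 1 else 0)) := by
      intro k
      have hcond : ((k : ℕ) < a ↔ (i : ℕ) < a) ↔ ((k : ℕ) < a ↔ (j : ℕ) < a) := by tauto
      rw [hqdef, hqdef, hsij]
      by_cases hk : ((k : ℕ) < a ↔ (i : ℕ) < a)
      · rw [if_pos hk, if_pos (hcond.mp hk)]; ring
      · rw [if_neg hk, if_neg (fun h => hk (hcond.mpr h))]; ring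
    have hsq : ‖q i - q j‖ ^ 2 = 2 * α ^ 2 := by
      rw [hns]
      have step : ∀ k, ((q i - q j) k) ^ 2 =
          α ^ 2 * ((if k = i then 1 else 0) + (if k = j then 1 else 0)) := by
        intro k
        rw [PiLp.sub_apply, hsub k]
        rcases eq_or_ne k i with hki | hki
        · have hkj : k ≠ j := fun hkj => hij (hki.symm.trans hkj)
          rw [if_pos hki, if_neg hkj]; ring
        · rw [if_neg hki]
          rcases eq_or_ne k j with hkj | hkj
          · rw [if_pos hkj]; ring
          · rw [if_neg hkj]; ring
      rw [Finset.sum_congr rfl (fun k _ => step k), ← Finset.mul_sum,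
        Finset.sum_add_distrib, Finset.sum_ite_eq' Finset.univ i,
        Finset.sum_ite_eq' Finset.univ j, if_pos (Finset.mem_univ i),
        if_pos (Finset.mem_univ j)]
      ring
    have hTval : ‖q i - q j‖ ^ 2 = T := by
      rw [hsq, hα2, hT]
    have hnorm : ‖q i - q j‖ = Real.sqrt T := by
      rw [← hTval, Real.sqrt_sq (norm_nonneg _)]
    constructor
    · rw [hnorm]
      calc (1:ℝ) = Real.sqrt 1 := by rw [Real.sqrt_one]
        _ ≤ Real.sqrt T := Real.sqrt_le_sqrt hT1
    · rw [hnorm]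
  -- different groups : distance = 1
  · have hsum1 : ((s i : ℝ))⁻¹ + ((s j : ℝ))⁻¹ = (a : ℝ)⁻¹ + (b : ℝ)⁻¹ := by
      simp only [hs]
      by_cases hi : (i : ℕ) < a
      · have hj : ¬ (j : ℕ) < a := fun h => hg ⟨fun _ => h, fun _ => hi⟩
        rw [if_pos hi, if_neg hj]
      · have hj : (j : ℕ) < a := by
          by_contra hj
          exact hg ⟨fun h => absurd h hi, fun h => absurd h hj⟩
        rw [if_neg hi, if_pos hj, add_comm]
    have hsq : ‖q i - q j‖ ^ 2 = 1 := by
      rw [hns]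
      have step : ∀ k, ((q i - q j) k) ^ 2 =
          (q i k) ^ 2 - 2 * (q i k * q j k) + (q j k) ^ 2 := by
        intro k; rw [PiLp.sub_apply]; ring
      rw [Finset.sum_congr rfl (fun k _ => step k)]
      rw [Finset.sum_add_distrib, Finset.sum_sub_distrib, ← Finset.mul_sum]
      rw [Finset.sum_eq_zero (fun k _ => hcross i j hg k), hnormq i, hnormq j, mul_zero,
        sub_zero]
      have hre : α ^ 2 * (1 - ((s i : ℝ))⁻¹) + α ^ 2 * (1 - ((s j : ℝ))⁻¹)
          = α ^ 2 * (2 - (((s i : ℝ))⁻¹ + ((s j : ℝ))⁻¹)) := by ring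
      rw [hre, hsum1, hα2]
      rw [show (2 : ℝ) - ((a : ℝ)⁻¹ + (b : ℝ)⁻¹) = C by rw [hC]; ring]
      exact inv_mul_cancel₀ (ne_of_gt hCpos)
    have hnorm : ‖q i - q j‖ = 1 := by
      have h5 := Real.sqrt_sq (norm_nonneg (q i - q j))
      rw [← h5, hsq, Real.sqrt_one]
    rw [hnorm]
    exact ⟨le_refl 1, by
      calc (1:ℝ) = Real.sqrt 1 := by rw [Real.sqrt_one]
        _ ≤ Real.sqrt T := Real.sqrt_le_sqrt hT1⟩

lemma extract_pm {n : ℕ} (x : Fin n → ℤ) (h1 : ∀ i, x i = 1 ∨ x i = 0 ∨ x i = -1)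
    (h2 : ∑ i, x i ^ 2 = 2) (h3 : ∑ i, x i = 0) :
    ∃ i j : Fin n, i ≠ j ∧ x i = 1 ∧ x j = -1 ∧ ∀ k, k ≠ i → k ≠ j → x k = 0 := by
  classical
  set S : Finset (Fin n) := Finset.univ.filter (fun i => x i ≠ 0) with hS
  have hout : ∀ k, k ∉ S → x k = 0 := by
    intro k hk
    by_contra hne
    exact hk (by rw [hS, Finset.mem_filter]; exact ⟨Finset.mem_univ _, hne⟩)
  have hsq1 : ∀ i ∈ S, x i ^ 2 = 1 := by
    intro i hi
    rw [hS, Finset.mem_filter] at hi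
    rcases h1 i with h | h | h
    · rw [h]; ring
    · exact absurd h hi.2
    · rw [h]; ring
  have hcard : S.card = 2 := by
    have e1 : ∑ i ∈ S, x i ^ 2 = ∑ i, x i ^ 2 :=
      Finset.sum_subset (Finset.subset_univ S)
        (fun k _ hk => by rw [hout k hk]; ring)
    have e2 : ∑ i ∈ S, x i ^ 2 = ∑ i ∈ S, 1 := Finset.sum_congr rfl hsq1
    rw [e2, Finset.sum_const, nsmul_eq_mul, mul_one] at e1
    rw [h2] at e1
    exact_mod_cast e1
  rcases Finset.card_eq_two.1 hcard with ⟨i, j, hij, hSij⟩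
  have hiS : i ∈ S := by rw [hSij]; simp
  have hjS : j ∈ S := by rw [hSij]; simp
  have hxi : x i ≠ 0 := by rw [hS, Finset.mem_filter] at hiS; exact hiS.2
  have hxj : x j ≠ 0 := by rw [hS, Finset.mem_filter] at hjS; exact hjS.2
  have hsum : x i + x j = 0 := by
    have e1 : ∑ k ∈ S, x k = ∑ k, x k :=
      Finset.sum_subset (Finset.subset_univ S) (fun k _ hk => hout k hk)
    rw [hSij, Finset.sum_pair hij, h3] at e1
    exact e1
  have hrest : ∀ k, k ≠ i → k ≠ j → x k = 0 := by
    intro k hki hkj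
    apply hout
    rw [hSij]
    simp [hki, hkj]
  rcases h1 i with hi | hi | hi
  · exact ⟨i, j, hij, hi, by omega, hrest⟩
  · exact absurd hi hxi
  · refine ⟨j, i, hij.symm, by omega, hi, fun k hkj hki => hrest k hki hkj⟩

lemma T_eq (d : ℕ) (hd : 3 ≤ d) :
    (if Even d then (d : ℝ) / ((d : ℝ) - 2)
      else ((d : ℝ) ^ 2 - 1) / ((d : ℝ) ^ 2 - 2 * d - 1)) =
    2 * (2 - ((d / 2 : ℕ) : ℝ)⁻¹ - (((d - d / 2 : ℕ)) : ℝ)⁻¹)⁻¹ := by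
  rcases Nat.even_or_odd d with he | ho
  · rw [if_pos he]
    obtain ⟨m, hm⟩ := he
    have hm2 : 2 ≤ m := by omega
    have h1 : d / 2 = m := by omega
    have h2 : d - d / 2 = m := by omega
    rw [h2, h1, hm]
    have hmR : (2 : ℝ) ≤ (m : ℝ) := by exact_mod_cast hm2
    have hm0 : (m : ℝ) ≠ 0 := by linarith
    have hm1 : (m : ℝ) - 1 ≠ 0 := by linarith
    have hd2 : (((m + m : ℕ)) : ℝ) = 2 * m := by push_cast; ring
    rw [hd2]
    have hden : 2 * (m:ℝ) - 2 ≠ 0 := by linarith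
    have e1 : 2 - ((m:ℝ))⁻¹ - ((m:ℝ))⁻¹ = (2 * (m:ℝ) - 2) / m := by
      field_simp; ring
    rw [e1, inv_div]
    have e2 : 2 * ((m:ℝ) / (2 * (m:ℝ) - 2)) = (2 * (m:ℝ)) / (2 * (m:ℝ) - 2) := by ring
    rw [e2]
  · rw [if_neg (Nat.not_even_iff_odd.mpr ho)]
    obtain ⟨m, hm⟩ := ho
    have hm1 : 1 ≤ m := by omega
    have h1 : d / 2 = m := by omega
    have h2 : d - d / 2 = m + 1 := by omega
    rw [h2, h1, hm]
    have hmR : (1 : ℝ) ≤ (m : ℝ) := by exact_mod_cast hm1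
    have hm0 : (m : ℝ) ≠ 0 := by linarith
    have hm10 : (m : ℝ) + 1 ≠ 0 := by linarith
    have hd2 : (((2 * m + 1 : ℕ)) : ℝ) = 2 * m + 1 := by push_cast; ring
    have hd3 : (((m + 1 : ℕ)) : ℝ) = m + 1 := by push_cast; ring
    rw [hd2, hd3]
    have hden : (2 * (m:ℝ) + 1) ^ 2 - 2 * (2 * (m:ℝ) + 1) - 1 ≠ 0 := by nlinarith
    have hden2 : 2 * (m:ℝ) ^ 2 - 1 ≠ 0 := by nlinarith
    have e1 : 2 - ((m:ℝ))⁻¹ - ((m:ℝ) + 1)⁻¹ = (2 * (m:ℝ) ^ 2 - 1) / ((m:ℝ) * ((m:ℝ) + 1)) := by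
      field_simp; ring
    rw [e1, inv_div]
    have e2 : 2 * ((m:ℝ) * ((m:ℝ) + 1) / (2 * (m:ℝ) ^ 2 - 1))
        = (2 * (m:ℝ) * ((m:ℝ) + 1)) / (2 * (m:ℝ) ^ 2 - 1) := by ring
    rw [e2, div_eq_div_iff hden hden2]
    ring


/-- If `G` admits an oriented `d`-cycle double cover (`d ≥ 3`), then
`φ_{d-2}(G) ≤ 1 + √(d/(d-2))` for even `d`, and
`φ_{d-2}(G) ≤ 1 + √((d²-1)/(d²-2d-1))` for odd `d`. -/
theorem stmt15 {V : Type*} [Fintype V] (G : SimpleGraph V) (d : ℕ) (hd : 3 ≤ d)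
    (h : ∃ c : Fin d → V → V → ℤ, IsOrientedCDC G c) :
    flowNumber G (d - 2) ≤
      if Even d then 1 + Real.sqrt ((d : ℝ) / ((d : ℝ) - 2))
      else 1 + Real.sqrt (((d : ℝ) ^ 2 - 1) / ((d : ℝ) ^ 2 - 2 * d - 1)) := by
  classical
  obtain ⟨c, hc1, hc2, hc3, hc4, hc5⟩ := h
  set T : ℝ := if Even d then (d : ℝ) / ((d : ℝ) - 2)
    else ((d : ℝ) ^ 2 - 1) / ((d : ℝ) ^ 2 - 2 * d - 1) with hTdef
  obtain ⟨p, hp⟩ := exists_points d hd T (by rw [hTdef]; exact T_eq d hd)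
  have hgoal : (if Even d then 1 + Real.sqrt ((d : ℝ) / ((d : ℝ) - 2))
      else 1 + Real.sqrt (((d : ℝ) ^ 2 - 1) / ((d : ℝ) ^ 2 - 2 * d - 1)))
      = 1 + Real.sqrt T := by
    rw [hTdef]; split_ifs <;> rfl
  rw [hgoal]
  set i0 : Fin d := ⟨0, by omega⟩ with hi0
  set i1 : Fin d := ⟨1, by omega⟩ with hi1
  have hne : i0 ≠ i1 := by
    intro hcon
    rw [hi0, hi1, Fin.mk.injEq] at hcon
    omega
  have hsqrtT : 1 ≤ Real.sqrt T := le_trans (hp i0 i1 hne).1 (hp i0 i1 hne).2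
  set f : V → V → EuclideanSpace ℝ (Fin (d - 2)) :=
    fun u v => ∑ i, ((c i u v : ℝ)) • p i with hf
  apply csInf_le
  · exact ⟨2, fun x hx => hx.1⟩
  refine ⟨by linarith, f, ⟨?_, ?_, ?_⟩, ?_⟩
  · intro u v
    have step : ∀ i : Fin d, ((c i u v : ℝ)) • p i = -(((c i v u : ℝ)) • p i) := by
      intro i
      rw [hc1 i u v]
      push_cast
      rw [neg_smul]
    show (∑ i, ((c i u v : ℝ)) • p i) = - ∑ i, ((c i v u : ℝ)) • p i
    rw [Finset.sum_congr rfl (fun i _ => step i), Finset.sum_neg_distrib]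
  · intro u v huv
    show (∑ i, ((c i u v : ℝ)) • p i) = 0
    apply Finset.sum_eq_zero
    intro i _
    rw [hc2 i u v huv, Int.cast_zero, zero_smul]
  · intro v
    show (∑ u, ∑ i, ((c i v u : ℝ)) • p i) = 0
    rw [Finset.sum_comm]
    apply Finset.sum_eq_zero
    intro i _
    rw [← Finset.sum_smul]
    have e1 : (∑ u, ((c i v u : ℝ))) = ((∑ u, c i v u : ℤ) : ℝ) := by push_cast; rfl
    rw [e1, hc4 i v, Int.cast_zero, zero_smul]
  · intro u v huv
    obtain ⟨hsum2, hsum0⟩ := hc5 u v huv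
    obtain ⟨i, j, hij, hxi, hxj, hrest⟩ :=
      extract_pm (fun i => c i u v) (fun i => hc3 i u v) hsum2 hsum0
    have hfv : f u v = p i - p j := by
      show (∑ k, ((c k u v : ℝ)) • p k) = p i - p j
      rw [← Finset.sum_subset (Finset.subset_univ ({i, j} : Finset (Fin d)))
        (fun k _ hk => by
          have h1 : k ≠ i := fun hc => hk (by rw [hc]; simp)
          have h2 : k ≠ j := fun hc => hk (by rw [hc]; simp)
          rw [hrest k h1 h2, Int.cast_zero, zero_smul])]
      rw [Finset.sum_pair hij, hxi, hxj]
      push_cast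
      rw [one_smul, neg_one_smul]
      abel
    rw [hfv]
    rw [Set.mem_Icc]
    refine ⟨(hp i j hij).1, ?_⟩
    rw [show (1 + Real.sqrt T) - 1 = Real.sqrt T by ring]
    exact (hp i j hij).2
end

section
/- If a graph G admits an oriented 5-cycle double cover, then φ_4(G) = 2 (G admits an S³-flow, i.e., a flow into ℝ⁴ with all edge values of norm 1). -/
open scoped BigOperators

noncomputable def sumFun5 : EuclideanSpace ℝ (Fin 5) →ₗ[ℝ] ℝ where
  toFun x := ∑ i, x i
  map_add' x y := by simp [Finset.sum_add_distrib]
  map_smul' r x := by simp [Finset.mul_sum]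

lemma finrank_ker_sumFun5 : Module.finrank ℝ (LinearMap.ker sumFun5) = 4 := by
  have hsurj : Function.Surjective sumFun5 := by
    intro r
    refine ⟨EuclideanSpace.single 0 r, ?_⟩
    simp [sumFun5, EuclideanSpace.single_apply]
  have h1 := LinearMap.finrank_range_add_finrank_ker sumFun5
  rw [LinearMap.range_eq_top.2 hsurj] at h1
  simp [finrank_euclideanSpace_fin, finrank_top] at h1
  omega

noncomputable def iso5 : (LinearMap.ker sumFun5) ≃ₗᵢ[ℝ] EuclideanSpace ℝ (Fin 4) :=
  ((stdOrthonormalBasis ℝ (LinearMap.ker sumFun5)).reindex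
    (finCongr finrank_ker_sumFun5)).repr


lemma unitFlow_of_CDC {V : Type*} [Fintype V] (G : SimpleGraph V)
    (h : ∃ c : Fin 5 → V → V → ℤ, IsOrientedCDC G c) :
    ∃ f : V → V → EuclideanSpace ℝ (Fin 4), IsFlow G f ∧
      ∀ u v, G.Adj u v → ‖f u v‖ = 1 := by
  obtain ⟨c, hanti, hsupp, hval, hcons, hedge⟩ := h
  have hsum0 : ∀ u v, ∑ j, c j u v = 0 := by
    intro u v
    by_cases hG : G.Adj u v
    · exact (hedge u v hG).2
    · simp [hsupp _ _ _ hG]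
  set g : V → V → EuclideanSpace ℝ (Fin 5) :=
    fun u v => WithLp.toLp 2 (fun j => (Real.sqrt 2)⁻¹ * (c j u v : ℝ) : Fin 5 → ℝ) with hg
  have hmem : ∀ u v, g u v ∈ LinearMap.ker sumFun5 := by
    intro u v
    have : (∑ j, ((c j u v : ℝ))) = 0 := by
      rw [← Int.cast_sum, hsum0 u v]; simp
    simp [sumFun5, LinearMap.mem_ker, hg, ← Finset.mul_sum, this]
  set F : V → V → LinearMap.ker sumFun5 := fun u v => ⟨g u v, hmem u v⟩ with hF
  refine ⟨fun u v => iso5 (F u v), ⟨?_, ?_, ?_⟩, ?_⟩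
  · intro u v
    show iso5 (F u v) = - iso5 (F v u)
    rw [← map_neg]
    congr 1
    apply Subtype.ext
    rw [Submodule.coe_neg]
    ext j
    show (Real.sqrt 2)⁻¹ * (c j u v : ℝ) = -((Real.sqrt 2)⁻¹ * (c j v u : ℝ))
    rw [hanti j u v]; push_cast; ring
  · intro u v hG
    show iso5 (F u v) = 0
    have : F u v = 0 := by
      apply Subtype.ext
      ext j
      show (Real.sqrt 2)⁻¹ * (c j u v : ℝ) = 0
      simp [hsupp j u v hG]
    rw [this, map_zero]
  · intro v
    show ∑ u, iso5 (F v u) = 0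
    rw [← map_sum, ← map_zero iso5]
    congr 1
    apply Subtype.ext
    rw [AddSubmonoidClass.coe_finset_sum]
    ext j
    rw [WithLp.ofLp_sum, Finset.sum_apply]
    show (∑ u, (Real.sqrt 2)⁻¹ * (c j v u : ℝ)) = 0
    rw [← Finset.mul_sum, ← Int.cast_sum, hcons j v]
    simp
  · intro u v hG
    show ‖iso5 (F u v)‖ = 1
    rw [iso5.norm_map]
    have hnormF : ‖F u v‖ = ‖g u v‖ := rfl
    rw [hnormF, EuclideanSpace.norm_eq]
    have h2 : (∑ j, ((c j u v : ℝ))^2) = 2 := by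
      exact_mod_cast (hedge u v hG).1
    have : ∑ j, ‖g u v j‖ ^ 2 = 1 := by
      simp only [hg, Real.norm_eq_abs, sq_abs, mul_pow, ← Finset.mul_sum, h2]
      rw [← Real.sqrt_inv, Real.sq_sqrt (by norm_num)]
      norm_num
    rw [this, Real.sqrt_one]

/-- If `G` admits an oriented 5-cycle double cover then `φ_4(G) = 2`: `G` admits an
`S³`-flow, i.e. a flow into `ℝ⁴` with all edge values of norm `1`. -/
theorem stmt19 {V : Type*} [Fintype V] (G : SimpleGraph V)
    (h : ∃ c : Fin 5 → V → V → ℤ, IsOrientedCDC G c) :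
    flowNumber G 4 = 2 ∧
    ∃ f : V → V → EuclideanSpace ℝ (Fin 4), IsFlow G f ∧
      ∀ u v, G.Adj u v → ‖f u v‖ = 1 := by
  obtain ⟨f, hflow, hnorm⟩ := unitFlow_of_CDC G h
  have hNZF : HasNZF G 2 4 :=
    ⟨f, hflow, fun u v huv => by rw [hnorm u v huv]; norm_num⟩
  refine ⟨le_antisymm ?_ ?_, f, hflow, hnorm⟩
  · exact csInf_le ⟨2, fun r hr => hr.1⟩ ⟨le_refl 2, hNZF⟩
  · exact le_csInf ⟨2, le_refl 2, hNZF⟩ fun r hr => hr.1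
end
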